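/- arXiv:0810.0338 — 2 statements merged into one kernel-verified Lean document; each statement's English description precedes it below -/
import Mathlib

section
/- Let G be a compact topological group, let V be a finite-dimensional real vector space carrying a continuous linear representation ρ of G, let h ∈ G, and let A, B ⊆ V be subspaces with ρ(h)(A) = A, ρ(h)(B) = B, and A + B = V. Then ker(ρ(h) − id_V) = (A ∩ ker(ρ(h) − id_V)) + (B ∩ ker(ρ(h) − id_V)). -/
/-- If a vector `v` is fixed by `ρ h` and lies in the range of `ρ h - 1`, then `v = 0`. -/
lemma fixed_and_range_aux
    {G : Type*} [Group G] [TopologicalSpace G] [CompactSpace G]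
    {V : Type*} [NormedAddCommGroup V] [NormedSpace ℝ V]
    (ρ : G →* (V →ₗ[ℝ] V))
    (hρ : Continuous fun p : G × V => ρ p.1 p.2)
    (h : G) (u v : V) (hv : ρ h v = v) (huv : ρ h u - u = v) : v = 0 := by
  have key : ∀ n : ℕ, ρ (h ^ n) u = u + (n : ℝ) • v := by
    intro n
    induction n with
    | zero => simp
    | succ n ih =>
      rw [pow_succ', map_mul, Module.End.mul_apply, ih, map_add, map_smul, hv]
      have : ρ h u = u + v := by rw [← huv]; abel
      rw [this]
      push_cast
      module
  have hcont : Continuous fun g : G => ρ g u :=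
    hρ.comp (continuous_id.prodMk continuous_const)
  have hcomp : IsCompact (Set.range fun g : G => ρ g u) := isCompact_range hcont
  obtain ⟨C, hC⟩ := hcomp.isBounded.exists_norm_le
  have hbound : ∀ n : ℕ, (n : ℝ) * ‖v‖ ≤ C + ‖u‖ := by
    intro n
    have h1 : (n : ℝ) • v = ρ (h ^ n) u - u := by rw [key n]; abel
    have h2 : ‖(n : ℝ) • v‖ ≤ ‖ρ (h ^ n) u‖ + ‖u‖ := by
      rw [h1]; exact norm_sub_le _ _
    have h3 : ‖ρ (h ^ n) u‖ ≤ C := hC _ ⟨h ^ n, rfl⟩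
    calc (n : ℝ) * ‖v‖ = ‖(n : ℝ) • v‖ := by
            rw [norm_smul, Real.norm_natCast]
      _ ≤ C + ‖u‖ := by linarith
  by_contra hv0
  have hvpos : 0 < ‖v‖ := norm_pos_iff.mpr hv0
  obtain ⟨n, hn⟩ := exists_nat_gt ((C + ‖u‖) / ‖v‖)
  have := hbound n
  rw [div_lt_iff₀ hvpos] at hn
  linarith

/-- Inside an `h`-invariant subspace `S`, every vector decomposes as a fixed vector plus a
vector in the range of `ρ h - 1` (both taken inside `S`). -/
lemma decomp_aux
    {G : Type*} [Group G] [TopologicalSpace G] [CompactSpace G]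
    {V : Type*} [NormedAddCommGroup V] [NormedSpace ℝ V] [FiniteDimensional ℝ V]
    (ρ : G →* (V →ₗ[ℝ] V))
    (hρ : Continuous fun p : G × V => ρ p.1 p.2)
    (h : G) (S : Submodule ℝ V) (hS : Submodule.map (ρ h) S = S)
    (x : V) (hx : x ∈ S) :
    ∃ a u, a ∈ S ∧ u ∈ S ∧ ρ h a = a ∧ x = a + (ρ h u - u) := by
  have hmaps : ∀ y ∈ S, ρ h y ∈ S := fun y hy => hS ▸ Submodule.mem_map_of_mem hy
  set f : S →ₗ[ℝ] S := (ρ h).restrict hmaps with hf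
  set e : S →ₗ[ℝ] S := f - LinearMap.id with he
  have hdisj : LinearMap.ker e ⊓ LinearMap.range e = ⊥ := by
    rw [eq_bot_iff]
    rintro y ⟨hy1, hy2⟩
    have hy1' : f y = y := by
      have : e y = 0 := hy1
      rw [he, LinearMap.sub_apply, LinearMap.id_apply, sub_eq_zero] at this
      exact this
    obtain ⟨z, hz⟩ := hy2
    have hz' : f z - z = y := by
      have : e z = y := hz
      rwa [he, LinearMap.sub_apply, LinearMap.id_apply] at this
    have hfix : ρ h (y : V) = (y : V) := by
      have := congrArg (Subtype.val) hy1'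
      simpa [hf, LinearMap.restrict_apply] using this
    have hrange : ρ h (z : V) - (z : V) = (y : V) := by
      have := congrArg (Subtype.val) hz'
      simpa [hf, LinearMap.restrict_apply] using this
    have : (y : V) = 0 := fixed_and_range_aux ρ hρ h (z : V) (y : V) hfix hrange
    simpa using this
  have hsup : LinearMap.ker e ⊔ LinearMap.range e = ⊤ := by
    apply Submodule.eq_top_of_finrank_eq
    have h1 := Submodule.finrank_sup_add_finrank_inf_eq (LinearMap.ker e) (LinearMap.range e)
    rw [hdisj] at h1
    simp only [finrank_bot, add_zero] at h1
    have h2 := LinearMap.finrank_range_add_finrank_ker e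
    omega
  have hxS : (⟨x, hx⟩ : S) ∈ LinearMap.ker e ⊔ LinearMap.range e := hsup ▸ Submodule.mem_top
  obtain ⟨a, ha, b, hb, hab⟩ := Submodule.mem_sup.mp hxS
  obtain ⟨u, hu⟩ := hb
  refine ⟨(a : V), (u : V), a.2, u.2, ?_, ?_⟩
  · have : f a = a := by
      have : e a = 0 := ha
      rw [he, LinearMap.sub_apply, LinearMap.id_apply, sub_eq_zero] at this
      exact this
    have := congrArg (Subtype.val) this
    simpa [hf, LinearMap.restrict_apply] using this
  · have hu' : f u - u = b := by
      have : e u = b := hu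
      rwa [he, LinearMap.sub_apply, LinearMap.id_apply] at this
    have h1 := congrArg (Subtype.val) hab
    have h2 := congrArg (Subtype.val) hu'
    simp only [Submodule.coe_add] at h1
    have h2' : ρ h (u : V) - (u : V) = (b : V) := by
      simpa [hf, LinearMap.restrict_apply] using h2
    rw [← h1, h2']

/-- If `A` and `B` are `h`-invariant subspaces of a finite-dimensional continuous representation
`V` of a compact group with `A + B = V`, then the `h`-fixed subspace of `V` is the sum of the
`h`-fixed vectors in `A` and the `h`-fixed vectors in `B`. -/
theorem fixed_subspace_eq_sup_of_invariant
    (G : Type*) [Group G] [TopologicalSpace G] [IsTopologicalGroup G] [CompactSpace G]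
    (V : Type*) [NormedAddCommGroup V] [NormedSpace ℝ V] [FiniteDimensional ℝ V]
    (ρ : G →* (V →ₗ[ℝ] V))
    (hρ : Continuous fun p : G × V => ρ p.1 p.2)
    (h : G) (A B : Submodule ℝ V)
    (hA : Submodule.map (ρ h) A = A) (hB : Submodule.map (ρ h) B = B)
    (hAB : A ⊔ B = ⊤) :
    LinearMap.ker (ρ h - LinearMap.id) =
      (A ⊓ LinearMap.ker (ρ h - LinearMap.id)) ⊔ (B ⊓ LinearMap.ker (ρ h - LinearMap.id)) := by
  apply le_antisymm
  · intro v hv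
    have hvfix : ρ h v = v := by
      have h0 := LinearMap.mem_ker.mp hv
      rwa [LinearMap.sub_apply, LinearMap.id_apply, sub_eq_zero] at h0
    have hvmem : v ∈ A ⊔ B := hAB ▸ Submodule.mem_top
    obtain ⟨a, haA, b, hbB, hab⟩ := Submodule.mem_sup.mp hvmem
    obtain ⟨a₁, u₁, ha₁, hu₁, hfa₁, hda⟩ := decomp_aux ρ hρ h A hA a haA
    obtain ⟨b₁, u₂, hb₁, hu₂, hfb₁, hdb⟩ := decomp_aux ρ hρ h B hB b hbB
    have hw : ρ h (u₁ + u₂) - (u₁ + u₂) = v - a₁ - b₁ := by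
      rw [map_add]
      have hv' : v = a₁ + (ρ h u₁ - u₁) + (b₁ + (ρ h u₂ - u₂)) := by
        rw [← hda, ← hdb, hab]
      rw [hv']; abel
    have hfixw : ρ h (v - a₁ - b₁) = v - a₁ - b₁ := by
      rw [map_sub, map_sub, hvfix, hfa₁, hfb₁]
    have hzero : v - a₁ - b₁ = 0 := fixed_and_range_aux ρ hρ h (u₁ + u₂) _ hfixw hw
    have hveq : v = a₁ + b₁ := by
      have h0 : v - (a₁ + b₁) = 0 := by rw [← hzero]; abel
      rw [sub_eq_zero] at h0; exact h0
    have hker : ∀ w : V, ρ h w = w → w ∈ LinearMap.ker (ρ h - LinearMap.id) := by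
      intro w hw'
      rw [LinearMap.mem_ker, LinearMap.sub_apply, LinearMap.id_apply, sub_eq_zero]
      exact hw'
    exact Submodule.mem_sup.mpr ⟨a₁, ⟨ha₁, hker a₁ hfa₁⟩, b₁, ⟨hb₁, hker b₁ hfb₁⟩, hveq.symm⟩
  · rw [sup_le_iff]
    exact ⟨inf_le_right, inf_le_right⟩
end

section
/- Let G be a compact topological group, h ∈ G, and let U and V be finite-dimensional real vector spaces carrying continuous linear representations ρ_U and ρ_V of G. Let φ : U → V be a linear map with φ ∘ ρ_U(h) = ρ_V(h) ∘ φ, and let E ⊆ V be a subspace with ρ(h)(E) = E. If E + range(φ) = V, then ker(ρ_V(h) − id) = (E ∩ ker(ρ_V(h) − id)) + φ(ker(ρ_U(h) − id)). -/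
/-- Uniform bound for a continuous representation of a compact group. -/
lemma aux_rep_bound (G : Type*) [Group G] [TopologicalSpace G] [CompactSpace G]
    (W : Type*) [NormedAddCommGroup W] [NormedSpace ℝ W] [FiniteDimensional ℝ W]
    (ρ : G →* (W →ₗ[ℝ] W)) (hρ : Continuous fun p : G × W => ρ p.1 p.2) :
    ∃ C : ℝ, ∀ g : G, ∀ w : W, ‖ρ g w‖ ≤ C * ‖w‖ := by
  have hpt : ∀ x : W, ∃ C, ∀ g : G, ‖LinearMap.toContinuousLinearMap (ρ g) x‖ ≤ C := by
    intro x
    have hc : Continuous fun g : G => ρ g x :=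
      hρ.comp (continuous_id.prodMk continuous_const)
    obtain ⟨C, hC⟩ := isCompact_univ.exists_bound_of_continuousOn hc.continuousOn
    exact ⟨C, fun g => by simpa using hC g (Set.mem_univ g)⟩
  obtain ⟨C', hC'⟩ := banach_steinhaus hpt
  refine ⟨C', fun g w => ?_⟩
  calc ‖ρ g w‖ = ‖LinearMap.toContinuousLinearMap (ρ g) w‖ := by simp
    _ ≤ ‖LinearMap.toContinuousLinearMap (ρ g)‖ * ‖w‖ :=
        (LinearMap.toContinuousLinearMap (ρ g)).le_opNorm w
    _ ≤ C' * ‖w‖ := mul_le_mul_of_nonneg_right (hC' g) (norm_nonneg w)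

/-- For a power-bounded operator, fixed vectors meet the range of `A - 1` trivially. -/
lemma aux_disjoint {W : Type*} [NormedAddCommGroup W] [NormedSpace ℝ W]
    (A : W →ₗ[ℝ] W) (C : ℝ) (hC : ∀ (n : ℕ) (w : W), ‖(A ^ n) w‖ ≤ C * ‖w‖) :
    LinearMap.ker (A - LinearMap.id) ⊓ LinearMap.range (A - LinearMap.id) = ⊥ := by
  rw [Submodule.eq_bot_iff]
  rintro v ⟨hv1, hv2⟩
  obtain ⟨w, hw⟩ := hv2
  have hAv : A v = v := by
    have := LinearMap.mem_ker.mp hv1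
    simpa [LinearMap.sub_apply, sub_eq_zero] using this
  have hvw : A w = w + v := by
    have h0 : A w - w = v := by simpa [LinearMap.sub_apply] using hw
    rw [← h0]; abel
  have claim : ∀ n : ℕ, (A ^ n) w = w + (n : ℝ) • v := by
    intro n
    induction n with
    | zero => simp
    | succ n ih =>
      rw [pow_succ', Module.End.mul_apply, ih]
      push_cast
      rw [map_add, map_smul, hvw, hAv, add_smul, one_smul]
      abel
  by_contra hvne
  have hv : 0 < ‖v‖ := norm_pos_iff.mpr hvne
  have key : ∀ n : ℕ, (n : ℝ) * ‖v‖ ≤ C * ‖w‖ + ‖w‖ := by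
    intro n
    have h1 : (n : ℝ) • v = (A ^ n) w - w := by rw [claim n]; abel
    calc (n : ℝ) * ‖v‖ = ‖(n : ℝ) • v‖ := by
          rw [norm_smul, Real.norm_natCast]
      _ = ‖(A ^ n) w - w‖ := by rw [h1]
      _ ≤ ‖(A ^ n) w‖ + ‖w‖ := norm_sub_le _ _
      _ ≤ C * ‖w‖ + ‖w‖ := by linarith [hC n w]
  obtain ⟨n, hn⟩ := exists_nat_gt ((C * ‖w‖ + ‖w‖) / ‖v‖)
  have := key n
  rw [div_lt_iff₀ hv] at hn
  linarith

/-- With finite dimension, the fixed space and the range of `A - 1` are complementary. -/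
lemma aux_sup_top {W : Type*} [NormedAddCommGroup W] [NormedSpace ℝ W] [FiniteDimensional ℝ W]
    (A : W →ₗ[ℝ] W) (C : ℝ) (hC : ∀ (n : ℕ) (w : W), ‖(A ^ n) w‖ ≤ C * ‖w‖) :
    LinearMap.ker (A - LinearMap.id) ⊔ LinearMap.range (A - LinearMap.id) = ⊤ := by
  have hd := aux_disjoint A C hC
  apply Submodule.eq_top_of_finrank_eq
  have h1 := Submodule.finrank_sup_add_finrank_inf_eq
    (LinearMap.ker (A - LinearMap.id)) (LinearMap.range (A - LinearMap.id))
  have h2 := LinearMap.finrank_range_add_finrank_ker (A - LinearMap.id)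
  rw [hd, finrank_bot, add_zero] at h1
  omega

/-- Pointwise form of descent of transversality to fixed-point sets: if `φ : U → V` intertwines
the action of `h`, `E ⊆ V` is `h`-invariant, and `E + range φ = V`, then the `h`-fixed subspace
of `V` is spanned by the `h`-fixed vectors of `E` together with the images under `φ` of the
`h`-fixed vectors of `U`. -/
theorem fixed_subspace_eq_sup_of_transverse
    (G : Type*) [Group G] [TopologicalSpace G] [IsTopologicalGroup G] [CompactSpace G]
    (h : G)
    (U V : Type*) [NormedAddCommGroup U] [NormedSpace ℝ U] [FiniteDimensional ℝ U]
    [NormedAddCommGroup V] [NormedSpace ℝ V] [FiniteDimensional ℝ V]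
    (ρU : G →* (U →ₗ[ℝ] U)) (ρV : G →* (V →ₗ[ℝ] V))
    (hρU : Continuous fun p : G × U => ρU p.1 p.2)
    (hρV : Continuous fun p : G × V => ρV p.1 p.2)
    (φ : U →ₗ[ℝ] V) (hφ : φ ∘ₗ ρU h = ρV h ∘ₗ φ)
    (E : Submodule ℝ V) (hE : Submodule.map (ρV h) E = E)
    (htrans : E ⊔ LinearMap.range φ = ⊤) :
    LinearMap.ker (ρV h - LinearMap.id) =
      (E ⊓ LinearMap.ker (ρV h - LinearMap.id)) ⊔
        Submodule.map φ (LinearMap.ker (ρU h - LinearMap.id)) := by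
  have hφ' : ∀ u : U, φ (ρU h u) = ρV h (φ u) := fun u => LinearMap.ext_iff.mp hφ u
  obtain ⟨CU, hCU⟩ := aux_rep_bound G U ρU hρU
  obtain ⟨CV, hCV⟩ := aux_rep_bound G V ρV hρV
  have hCUp : ∀ (n : ℕ) (w : U), ‖((ρU h) ^ n) w‖ ≤ CU * ‖w‖ := fun n w => by
    rw [← map_pow]; exact hCU _ w
  have hCVp : ∀ (n : ℕ) (w : V), ‖((ρV h) ^ n) w‖ ≤ CV * ‖w‖ := fun n w => by
    rw [← map_pow]; exact hCV _ w
  -- invariance of E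
  have hEmem : ∀ x ∈ E, ρV h x ∈ E := fun x hx => hE ▸ Submodule.mem_map_of_mem hx
  set AE : E →ₗ[ℝ] E := (ρV h).restrict hEmem with hAE
  have hCEp : ∀ (n : ℕ) (w : E), ‖(AE ^ n) w‖ ≤ CV * ‖w‖ := by
    intro n w
    rw [hAE, Module.End.pow_restrict]
    have heq : ‖((ρV h ^ n).restrict (Module.End.pow_apply_mem_of_forall_mem n hEmem)) w‖
        = ‖(ρV h ^ n) (w : V)‖ := rfl
    rw [heq]
    exact hCVp n w
  -- decompositions
  have hsupU := aux_sup_top (ρU h) CU hCUp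
  have hsupE := aux_sup_top AE CV hCEp
  have hdisjV := aux_disjoint (ρV h) CV hCVp
  apply le_antisymm
  · intro v hv
    have hvfix : ρV h v = v := by
      have := LinearMap.mem_ker.mp hv
      simpa [LinearMap.sub_apply, sub_eq_zero] using this
    -- use transversality
    obtain ⟨e, he, -, ⟨u, rfl⟩, hveu⟩ :=
      Submodule.mem_sup.mp (htrans ▸ Submodule.mem_top : v ∈ E ⊔ LinearMap.range φ)
    -- decompose u
    obtain ⟨fu, hfu, -, ⟨w, rfl⟩, hu⟩ :=
      Submodule.mem_sup.mp (hsupU ▸ Submodule.mem_top : u ∈ _)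
    have hfufix : ρU h fu = fu := by
      have := LinearMap.mem_ker.mp hfu
      simpa [LinearMap.sub_apply, sub_eq_zero] using this
    -- decompose e inside E
    obtain ⟨fe, hfe, re, hre, hee⟩ :=
      Submodule.mem_sup.mp (hsupE ▸ Submodule.mem_top : (⟨e, he⟩ : E) ∈ _)
    have hfefix : ρV h (fe : V) = (fe : V) := by
      have h0 := LinearMap.mem_ker.mp hfe
      have h1 : AE fe = fe := by
        simpa [LinearMap.sub_apply, sub_eq_zero] using h0
      calc ρV h (fe : V) = ((AE fe : E) : V) := rfl
        _ = (fe : V) := by rw [h1]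
    obtain ⟨we, hwe⟩ := hre
    -- the difference is both fixed and in the range of (ρV h - id)
    have hd0 : v - (fe : V) - φ fu ∈
        LinearMap.ker (ρV h - LinearMap.id) ⊓ LinearMap.range (ρV h - LinearMap.id) := by
      refine Submodule.mem_inf.mpr ⟨?_, ?_⟩
      · rw [LinearMap.mem_ker]
        simp only [LinearMap.sub_apply, LinearMap.id_apply, map_sub, hvfix, hfefix,
          ← hφ', hfufix]
        abel
      · refine ⟨(we : V) + φ w, ?_⟩
        have hre' : (re : V) = ρV h (we : V) - (we : V) := by
          have h2 := congrArg (Subtype.val) hwe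
          simp only [LinearMap.sub_apply, LinearMap.id_apply, AddSubgroupClass.coe_sub,
            hAE, LinearMap.restrict_coe_apply] at h2
          exact h2.symm
        have hee' : e = (fe : V) + (re : V) := by
          have h3 : ((⟨e, he⟩ : E) : V) = ((fe + re : E) : V) := by rw [hee]
          simpa using h3
        have hφw : φ ((ρU h) w - w) = ρV h (φ w) - φ w := by
          rw [map_sub, hφ']
        have hu' : u = fu + ((ρU h) w - w) := by
          simpa [LinearMap.sub_apply] using hu.symm
        simp only [LinearMap.sub_apply, LinearMap.id_apply, map_add]
        rw [← hveu, hee', hre', hu', map_add, hφw]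
        abel
    have hd := (Submodule.eq_bot_iff _).mp hdisjV _ hd0
    have hveq : v = (fe : V) + φ fu := by
      rw [sub_sub] at hd
      exact sub_eq_zero.mp hd
    refine Submodule.mem_sup.mpr ⟨(fe : V), ?_, φ fu, ⟨fu, hfu, rfl⟩, hveq.symm⟩
    refine Submodule.mem_inf.mpr ⟨fe.2, ?_⟩
    rw [LinearMap.mem_ker]
    simp [LinearMap.sub_apply, hfefix]
  · rw [sup_le_iff]
    refine ⟨inf_le_right, ?_⟩
    rintro x ⟨u, hu, rfl⟩
    have hufix : ρU h u = u := by
      have := LinearMap.mem_ker.mp hu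
      simpa [LinearMap.sub_apply, sub_eq_zero] using this
    rw [LinearMap.mem_ker]
    simp [LinearMap.sub_apply, ← hφ', hufix]
end
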